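/- arXiv:2410.15506 — 3 statements merged into one kernel-verified Lean document; each statement's English description precedes it below -/
import Mathlib

section
/- Let G = (L ⊔ R, E) be a bipartite graph with uniform left degree that is a (K, δ/2)-disperser, and let C ⊆ Σ^R be a code with relative distance at least δ. Then for any two distinct codewords c^1, c^2 ∈ C, the number of left vertices v such that G(c^1)(v) = G(c^2)(v) is strictly less than K. Consequently, the graph-concatenated code G(C) has minimum distance greater than |L| − K. -/
open Classical in
/-- Distance amplification: if `G` (given by the neighbor map `Γ`) is a `(K, δ/2)`-disperser
and `C` has relative distance at least `δ`, then any two distinct codewords of `G(C)` agree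
on fewer than `K` left vertices, so `G(C)` has minimum distance greater than `|L| - K`. -/
theorem stmt_3 {V R A : Type*} [Fintype V] [Fintype R] {D : ℕ}
    (Γ : V → Fin D → R) (K : ℕ) (δ : ℝ)
    (hG : ∀ S : Finset V, K ≤ S.card →
      (1 - δ / 2) * (Fintype.card R) ≤ ((S.biUnion (fun v => Finset.image (Γ v) Finset.univ)).card : ℝ))
    (C : Set (R → A))
    (hC : ∀ c1 ∈ C, ∀ c2 ∈ C, c1 ≠ c2 → δ * (Fintype.card R) ≤ (hammingDist c1 c2 : ℝ)) :
    ∀ c1 ∈ C, ∀ c2 ∈ C, c1 ≠ c2 →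
      ((Finset.univ.filter (fun v : V => (fun i => c1 (Γ v i)) = (fun i => c2 (Γ v i)))).card < K
      ∧ (Fintype.card V : ℝ) - K <
          (hammingDist (fun v (i : Fin D) => c1 (Γ v i)) (fun v (i : Fin D) => c2 (Γ v i)) : ℝ)) := by
  intro c1 hc1 c2 hc2 hne
  set S := Finset.univ.filter (fun v : V => (fun i => c1 (Γ v i)) = (fun i => c2 (Γ v i))) with hS
  have hdist := hC c1 hc1 c2 hc2 hne
  -- Agreement set in R
  set T := Finset.univ.filter (fun r : R => c1 r = c2 r) with hT
  have hTd : T.card + hammingDist c1 c2 = Fintype.card R := by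
    have : hammingDist c1 c2 = (Finset.univ.filter (fun r : R => ¬ c1 r = c2 r)).card := by
      simp [hammingDist, Finset.card_filter]
    rw [hT, this]
    rw [Finset.card_filter_add_card_filter_not, Finset.card_univ]
  have hSK : S.card < K := by
    by_contra h
    push_neg at h
    have hsub : S.biUnion (fun v => Finset.image (Γ v) Finset.univ) ⊆ T := by
      intro r hr
      rcases Finset.mem_biUnion.mp hr with ⟨v, hv, hrv⟩
      rcases Finset.mem_image.mp hrv with ⟨i, _, rfl⟩
      have := Finset.mem_filter.mp hv
      exact Finset.mem_filter.mpr ⟨Finset.mem_univ _, congrFun this.2 i⟩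
    have h1 := hG S h
    have h2 : ((S.biUnion (fun v => Finset.image (Γ v) Finset.univ)).card : ℝ) ≤ T.card :=
      Nat.cast_le.mpr (Finset.card_le_card hsub)
    have h3 : (T.card : ℝ) + hammingDist c1 c2 = Fintype.card R := by
      exact_mod_cast congrArg (Nat.cast : ℕ → ℝ) hTd
    have hd0 : (hammingDist c1 c2 : ℝ) ≤ 0 := by nlinarith
    have : hammingDist c1 c2 = 0 := by exact_mod_cast le_antisymm (by exact_mod_cast hd0) (Nat.zero_le _)
    exact hne (hammingDist_eq_zero.mp this)
  refine ⟨hSK, ?_⟩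
  have hVd : S.card + hammingDist (fun v (i : Fin D) => c1 (Γ v i)) (fun v (i : Fin D) => c2 (Γ v i))
      = Fintype.card V := by
    have : hammingDist (fun v (i : Fin D) => c1 (Γ v i)) (fun v (i : Fin D) => c2 (Γ v i))
        = (Finset.univ.filter (fun v : V => ¬ (fun i => c1 (Γ v i)) = (fun i => c2 (Γ v i)))).card := by
      simp [hammingDist, Finset.card_filter]
    rw [hS, this, Finset.card_filter_add_card_filter_not, Finset.card_univ]
  have h1 : (S.card : ℝ) < K := Nat.cast_lt.mpr hSK
  have h2 : (S.card : ℝ) + (hammingDist (fun v (i : Fin D) => c1 (Γ v i))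
      (fun v (i : Fin D) => c2 (Γ v i)) : ℝ) = Fintype.card V := by exact_mod_cast hVd
  linarith
end

section
/- Let G be a (K, δ/2)-disperser with N left vertices such that the code G(C) (for C a code of relative distance δ on the right vertices) has minimum distance at least N − K, with K = ε²N/2. Then for any L = ⌊2/ε⌋ distinct codewords Λ of G(C), Σ_{v∈[N]} pl_v(Λ) ≤ N + C(L,2)·(ε²/2)·N < ε·L·N, so G(C) is (1−ε, ⌊2/ε⌋ − 1)-average-radius list decodable. -/
open Classical in
noncomputable def plurality {N : ℕ} {A : Type*} [Fintype A]
    (Λ : Finset (Fin N → A)) (v : Fin N) : ℕ :=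
  Finset.univ.sup (fun α : A => (Λ.filter (fun c => c v = α)).card)

open Classical Finset in
lemma plurality_key {N : ℕ} {A : Type*} [Fintype A] [Nonempty A]
    (Λ : Finset (Fin N → A)) (v : Fin N) :
    2 * plurality Λ v ≤ 2 + (Λ.offDiag.filter fun p => p.1 v = p.2 v).card := by
  obtain ⟨α, -, hα⟩ := Finset.exists_mem_eq_sup (univ : Finset A) univ_nonempty
    (fun α : A => (Λ.filter (fun c => c v = α)).card)
  rw [plurality, hα]
  set S := Λ.filter (fun c => c v = α) with hS
  have hsub : S.offDiag ⊆ Λ.offDiag.filter fun p => p.1 v = p.2 v := by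
    intro p hp
    simp only [Finset.mem_offDiag, hS, Finset.mem_filter] at hp ⊢
    obtain ⟨⟨h1, ha⟩, ⟨h2, hb⟩, hne⟩ := hp
    exact ⟨⟨h1, h2, hne⟩, ha.trans hb.symm⟩
  have hcard : S.card * S.card - S.card ≤ (Λ.offDiag.filter fun p => p.1 v = p.2 v).card := by
    rw [← Finset.offDiag_card]
    exact Finset.card_le_card hsub
  have hq : ∀ p : ℕ, 2 * p ≤ 2 + (p * p - p) := by
    intro p
    rcases p with _ | _ | k
    · simp
    · simp
    · have h1 : (k+2) * (k+2) - (k+2) = (k+2)*(k+1) := by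
        have h2 : (k+2) * (k+2) = (k+2)*(k+1) + (k+2) := by ring
        rw [h2, Nat.add_sub_cancel]
      rw [h1]
      nlinarith
  exact (hq S.card).trans (Nat.add_le_add_left hcard 2)

open Classical Finset in
lemma sum_filter_card_comm {N : ℕ} {β : Type*} (S : Finset β) (P : Fin N → β → Prop) :
    ∑ v : Fin N, (S.filter (P v)).card = ∑ b ∈ S, (Finset.univ.filter fun v => P v b).card := by
  simp only [Finset.card_filter]
  rw [Finset.sum_comm]

open Classical Finset in
lemma agree_add_dist {N : ℕ} {A : Type*} [Fintype A] (x y : Fin N → A) :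
    ((univ : Finset (Fin N)).filter fun v => x v = y v).card + hammingDist x y = N := by
  rw [hammingDist]
  have h1 : ({i | x i ≠ y i} : Finset (Fin N)) = univ.filter fun v => ¬ x v = y v := by
    ext i; simp
  rw [h1, Finset.card_filter_add_card_filter_not, Finset.card_univ, Fintype.card_fin]

open Classical in
/-- A code of length `N` with minimum distance at least `(1 - ε²/2)·N` satisfies, for any
`L = ⌊2/ε⌋` distinct codewords `Λ`, `∑_v pl_v(Λ) ≤ N + C(L,2)·(ε²/2)·N < ε·L·N`, hence is
`(1 - ε, ⌊2/ε⌋ - 1)`-average-radius list decodable. -/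
theorem stmt_5 {N : ℕ} {A : Type*} [Fintype A] (C : Finset (Fin N → A))
    (ε : ℝ) (hε : 0 < ε) (hε1 : ε < 1)
    (L : ℕ) (hLdef : L = ⌊(2 : ℝ) / ε⌋₊) (hL2 : 2 ≤ L)
    (hdist : ∀ c1 ∈ C, ∀ c2 ∈ C, c1 ≠ c2 →
      (1 - ε ^ 2 / 2) * N ≤ (hammingDist c1 c2 : ℝ)) :
    (∀ Λ ⊆ C, Λ.card = L →
      (∑ v, (plurality Λ v : ℝ)) ≤ N + (L.choose 2 : ℝ) * (ε ^ 2 / 2) * N ∧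
      (∑ v, (plurality Λ v : ℝ)) < ε * L * N) ∧
    (∀ y : Fin N → A, ∀ Λ ⊆ C, Λ.card = L →
      (L : ℝ) * (1 - ε) * N < ∑ c ∈ Λ, (hammingDist c y : ℝ)) := by
  classical
  -- floor facts
  have hεL : ε * L ≤ 2 := by
    have h1 : (L : ℝ) ≤ 2 / ε := by
      rw [hLdef]; exact Nat.floor_le (by positivity)
    calc ε * L ≤ ε * (2 / ε) := by nlinarith
    _ = 2 := by field_simp
  have hεL1 : 2 < ε * (L + 1) := by
    have h1 : (2 : ℝ) / ε < L + 1 := by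
      rw [hLdef]; exact Nat.lt_floor_add_one _
    calc (2:ℝ) = ε * (2 / ε) := by field_simp
    _ < ε * (L + 1) := by nlinarith
  have key : ∀ Λ ⊆ C, Λ.card = L →
      (∑ v, (plurality Λ v : ℝ)) ≤ N + (L.choose 2 : ℝ) * (ε ^ 2 / 2) * N ∧
      (∑ v, (plurality Λ v : ℝ)) < ε * L * N := by
    intro Λ hΛC hcard
    -- extract two distinct codewords
    obtain ⟨c1, h1, c2, h2, hne⟩ := Finset.one_lt_card.mp (by omega : 1 < Λ.card)
    have hA : Nonempty A := by
      by_contra h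
      exact hne (funext fun v => absurd (Nonempty.intro (c1 v)) h)
    have hN : 1 ≤ N := by
      by_contra h
      exact hne (funext fun v => absurd v.isLt (by omega))
    -- sum of agreements over off-diagonal pairs
    have hsumpair : ∀ p ∈ Λ.offDiag,
        (((Finset.univ.filter fun v => p.1 v = p.2 v).card : ℝ)) ≤ ε ^ 2 / 2 * N := by
      intro p hp
      rw [Finset.mem_offDiag] at hp
      have hd := hdist p.1 (hΛC hp.1) p.2 (hΛC hp.2.1) hp.2.2
      have he := agree_add_dist p.1 p.2
      have : ((Finset.univ.filter fun v => p.1 v = p.2 v).card : ℝ) + hammingDist p.1 p.2 = N := by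
        exact_mod_cast congrArg (Nat.cast : ℕ → ℝ) he
      nlinarith
    have hoffcard : (Λ.offDiag.card : ℝ) = L * L - L := by
      rw [Finset.offDiag_card, hcard]
      have : L ≤ L * L := Nat.le_mul_of_pos_left L (by omega)
      push_cast [this]
      ring
    -- main nat-level bound, then cast
    have hmain : 2 * (∑ v, (plurality Λ v : ℝ)) ≤ 2 * N + (L * L - L) * (ε ^ 2 / 2 * N) := by
      have h1 : ∀ v : Fin N, (2 * plurality Λ v : ℝ) ≤
          2 + ((Λ.offDiag.filter fun p => p.1 v = p.2 v).card : ℝ) := by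
        intro v
        exact_mod_cast plurality_key Λ v
      have h2 : (∑ v : Fin N, ((Λ.offDiag.filter fun p => p.1 v = p.2 v).card : ℝ)) =
          ∑ p ∈ Λ.offDiag, ((Finset.univ.filter fun v => p.1 v = p.2 v).card : ℝ) := by
        exact_mod_cast congrArg (Nat.cast : ℕ → ℝ)
          (sum_filter_card_comm Λ.offDiag (fun v p => p.1 v = p.2 v))
      have h3 : (∑ p ∈ Λ.offDiag, ((Finset.univ.filter fun v => p.1 v = p.2 v).card : ℝ)) ≤
          Λ.offDiag.card * (ε ^ 2 / 2 * N) := by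
        calc _ ≤ ∑ _p ∈ Λ.offDiag, (ε ^ 2 / 2 * N) := Finset.sum_le_sum hsumpair
        _ = Λ.offDiag.card * (ε ^ 2 / 2 * N) := by rw [Finset.sum_const, nsmul_eq_mul]
      have h4 : 2 * (∑ v, (plurality Λ v : ℝ)) ≤
          ∑ v : Fin N, (2 + ((Λ.offDiag.filter fun p => p.1 v = p.2 v).card : ℝ)) := by
        rw [Finset.mul_sum]
        exact Finset.sum_le_sum fun v _ => h1 v
      rw [Finset.sum_add_distrib, Finset.sum_const, Finset.card_univ, Fintype.card_fin,
        nsmul_eq_mul, h2] at h4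
      calc 2 * (∑ v, (plurality Λ v : ℝ)) ≤ N * 2 + _ := h4
      _ ≤ N * 2 + Λ.offDiag.card * (ε ^ 2 / 2 * N) := by linarith
      _ = 2 * N + (L * L - L) * (ε ^ 2 / 2 * N) := by rw [hoffcard]; ring
    have hchoose : (L.choose 2 : ℝ) = L * (L - 1) / 2 := by
      rw [Nat.cast_choose_two]
    have goal1 : (∑ v, (plurality Λ v : ℝ)) ≤ N + (L.choose 2 : ℝ) * (ε ^ 2 / 2) * N := by
      rw [hchoose]
      nlinarith [hmain]
    refine ⟨goal1, ?_⟩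
    have hNpos : (1 : ℝ) ≤ N := by exact_mod_cast hN
    have hLε : ε ≤ ε * L := by nlinarith [hε.le, (by exact_mod_cast hL2 : (2:ℝ) ≤ L)]
    have hstrict : (N : ℝ) + (L.choose 2 : ℝ) * (ε ^ 2 / 2) * N < ε * L * N := by
      rw [hchoose]
      have hL2' : (2 : ℝ) ≤ L := by exact_mod_cast hL2
      nlinarith [mul_nonneg (sub_nonneg.mpr hεL) (sub_nonneg.mpr hLε),
        mul_pos hε (by positivity : (0:ℝ) < (N:ℝ))]
    linarith
  refine ⟨key, ?_⟩
  intro y Λ hΛC hcard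
  obtain ⟨-, hlt⟩ := key Λ hΛC hcard
  -- ∑_c agree(c,y) ≤ ∑_v pl_v
  have hagree : (∑ c ∈ Λ, ((Finset.univ.filter fun v => c v = y v).card : ℝ)) ≤
      ∑ v, (plurality Λ v : ℝ) := by
    have hswap : (∑ v : Fin N, (Λ.filter fun c => c v = y v).card) =
        ∑ c ∈ Λ, (Finset.univ.filter fun v => c v = y v).card :=
      sum_filter_card_comm Λ (fun v c => c v = y v)
    have hle : ∀ v : Fin N, (Λ.filter fun c => c v = y v).card ≤ plurality Λ v := by
      intro v
      rw [plurality]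
      convert Finset.le_sup (f := fun α : A => (Λ.filter (fun c => c v = α)).card)
        (Finset.mem_univ (y v)) using 2
    calc (∑ c ∈ Λ, ((Finset.univ.filter fun v => c v = y v).card : ℝ))
        = ∑ v : Fin N, ((Λ.filter fun c => c v = y v).card : ℝ) := by
          exact_mod_cast (congrArg (Nat.cast : ℕ → ℝ) hswap).symm
    _ ≤ ∑ v, (plurality Λ v : ℝ) := Finset.sum_le_sum fun v _ => by exact_mod_cast hle v
  have hdistsum : (∑ c ∈ Λ, (hammingDist c y : ℝ)) =
      L * N - ∑ c ∈ Λ, ((Finset.univ.filter fun v => c v = y v).card : ℝ) := by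
    have : ∀ c ∈ Λ, (hammingDist c y : ℝ) =
        N - ((Finset.univ.filter fun v => c v = y v).card : ℝ) := by
      intro c _
      have := agree_add_dist c y
      have : ((Finset.univ.filter fun v => c v = y v).card : ℝ) + hammingDist c y = N := by
        exact_mod_cast congrArg (Nat.cast : ℕ → ℝ) this
      linarith
    rw [Finset.sum_congr rfl this, Finset.sum_sub_distrib, Finset.sum_const, hcard,
      nsmul_eq_mul]
  rw [hdistsum]
  nlinarith [hagree, hlt]
end

section
/- Let C ⊆ Σ^M be a code with relative distance δ and suppose G is a (K, δ/2)-disperser with N left vertices and uniform left degree D. In the erasure-based unique decoding process for G(C): each iteration that replaces values at a pair of left vertices u, v by ⊥ (because they send inconsistent values to a common right vertex) erases at least one erroneous left vertex. Hence if the received word y agrees with G(c) except for e errors and s erasures with 2e + s < N − K, then after the process terminates at least K left vertices still hold their correct (non-erased) values, and consequently at least a (1 − δ/2) fraction of right vertices receive at least one correct symbol. -/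
/-- One iteration of the erasure-based unique decoding process: two left vertices `u, v`
holding non-`⊥` values that send inconsistent values to a common right vertex are both
replaced by `⊥`. -/
def EraseStep {V R A : Type*} {D : ℕ} (Γ : V → Fin D → R) [DecidableEq V]
    (y y' : V → Option (Fin D → A)) : Prop :=
  ∃ (u v : V) (a b : Fin D → A) (i j : Fin D),
    y u = some a ∧ y v = some b ∧ Γ u i = Γ v j ∧ a i ≠ b j ∧
    y' = Function.update (Function.update y u none) v none

open Classical in
/-- Correctness of the erasure process: each step erases at least one erroneous left
vertex, and if the received word has `e` errors and `s` erasures with `2e + s < N - K`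
(where `Γ` is a `(K, δ/2)`-disperser), then after any sequence of steps at least `K` left
vertices still hold their correct values, so at least a `(1 - δ/2)` fraction of right
vertices receive a correct symbol. -/
theorem stmt_16 {V R A : Type*} [Fintype V] [Fintype R] [DecidableEq V] {D : ℕ}
    (Γ : V → Fin D → R) (K : ℕ) (δ : ℝ)
    (hG : ∀ S : Finset V, K ≤ S.card →
      (1 - δ / 2) * (Fintype.card R) ≤
        ((S.biUnion (fun v => Finset.image (Γ v) Finset.univ)).card : ℝ))
    (c : R → A)
    (y₀ : V → Option (Fin D → A)) (e s : ℕ)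
    (he : e = (Finset.univ.filter
      (fun u : V => ∃ a, y₀ u = some a ∧ a ≠ fun i => c (Γ u i))).card)
    (hs : s = (Finset.univ.filter (fun u : V => y₀ u = none)).card)
    (hbound : (2 * e + s : ℝ) < (Fintype.card V : ℝ) - K) :
    (∀ (y : V → Option (Fin D → A)) (u v : V) (a b : Fin D → A) (i j : Fin D),
      y u = some a → y v = some b → Γ u i = Γ v j → a i ≠ b j →
      (a ≠ fun i' => c (Γ u i')) ∨ (b ≠ fun i' => c (Γ v i'))) ∧
    (∀ y' : V → Option (Fin D → A), Relation.ReflTransGen (EraseStep Γ) y₀ y' →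
      K ≤ (Finset.univ.filter
        (fun u : V => y' u = some fun i => c (Γ u i))).card ∧
      (1 - δ / 2) * (Fintype.card R) ≤
        ((Finset.univ.filter (fun w : R =>
          ∃ (u : V) (i : Fin D), Γ u i = w ∧ y' u = some fun i' => c (Γ u i'))).card : ℝ)) := by
  classical
  -- a generic "one of the two is erroneous" fact
  have keypair : ∀ (y : V → Option (Fin D → A)) (u v : V) (a b : Fin D → A) (i j : Fin D),
      y u = some a → y v = some b → Γ u i = Γ v j → a i ≠ b j →
      (a ≠ fun i' => c (Γ u i')) ∨ (b ≠ fun i' => c (Γ v i')) := by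
    intro y u v a b i j hu hv hΓ hne
    by_contra h
    push_neg at h
    obtain ⟨ha, hb⟩ := h
    apply hne
    rw [ha, hb]
    simp [hΓ]
  refine ⟨keypair, ?_⟩
  intro y' hsteps
  -- error/erasure counters
  set Ecard : (V → Option (Fin D → A)) → ℕ := fun y =>
    (Finset.univ.filter (fun u : V => ∃ a, y u = some a ∧ a ≠ fun i => c (Γ u i))).card
    with hEcard
  set Scard : (V → Option (Fin D → A)) → ℕ := fun y =>
    (Finset.univ.filter (fun u : V => y u = none)).card with hScard
  -- the invariant is preserved along the process
  have key : ∀ y : V → Option (Fin D → A),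
      Relation.ReflTransGen (EraseStep Γ) y₀ y →
      2 * Ecard y + Scard y ≤ 2 * e + s := by
    intro y hy
    induction hy with
    | refl => simp [hEcard, hScard, he, hs]
    | @tail y₁ y₂ hprev hstep ih =>
      obtain ⟨u, v, a, b, i, j, hu, hv, hΓ, hab, hy₂⟩ := hstep
      -- pick an erroneous vertex among u, v
      have hw : ∃ w ∈ ({u, v} : Finset V),
          ∃ a', y₁ w = some a' ∧ a' ≠ fun i' => c (Γ w i') := by
        rcases keypair y₁ u v a b i j hu hv hΓ hab with h | h
        · exact ⟨u, by simp, a, hu, h⟩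
        · exact ⟨v, by simp, b, hv, h⟩
      obtain ⟨w, hwmem, hwbad⟩ := hw
      have hwE : w ∈ Finset.univ.filter
          (fun u : V => ∃ a, y₁ u = some a ∧ a ≠ fun i => c (Γ u i)) := by
        simp only [Finset.mem_filter, Finset.mem_univ, true_and]
        exact hwbad
      -- erasure count grows by at most 2
      have hS : Scard y₂ ≤ Scard y₁ + 2 := by
        have hsub : Finset.univ.filter (fun u : V => y₂ u = none) ⊆
            (Finset.univ.filter (fun u : V => y₁ u = none)) ∪ {u, v} := by
          intro x hx
          simp only [Finset.mem_filter, Finset.mem_univ, true_and] at hx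
          by_cases hxu : x = u
          · simp [hxu]
          · by_cases hxv : x = v
            · simp [hxv]
            · have : y₂ x = y₁ x := by
                rw [hy₂]
                simp [Function.update_of_ne hxv, Function.update_of_ne hxu]
              simp only [Finset.mem_union, Finset.mem_filter, Finset.mem_univ, true_and]
              left; rw [← this]; exact hx
        calc Scard y₂ ≤ ((Finset.univ.filter (fun u : V => y₁ u = none)) ∪ {u, v}).card :=
              Finset.card_le_card hsub
          _ ≤ Scard y₁ + ({u, v} : Finset V).card := Finset.card_union_le _ _
          _ ≤ Scard y₁ + 2 := by
              have := Finset.card_insert_le u ({v} : Finset V)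
              simp only [Finset.card_singleton] at this
              omega
      -- error count drops by at least 1
      have hE : Ecard y₂ + 1 ≤ Ecard y₁ := by
        have hsub : Finset.univ.filter
            (fun x : V => ∃ a, y₂ x = some a ∧ a ≠ fun i => c (Γ x i)) ⊆
            (Finset.univ.filter
              (fun x : V => ∃ a, y₁ x = some a ∧ a ≠ fun i => c (Γ x i))).erase w := by
          intro x hx
          simp only [Finset.mem_filter, Finset.mem_univ, true_and] at hx
          obtain ⟨a', ha', hbad⟩ := hx
          have hxu : x ≠ u := by
            rintro rfl
            by_cases hxv : x = v
            · rw [hy₂] at ha'; subst hxv; simp [Function.update_self] at ha'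
            · rw [hy₂] at ha'
              rw [Function.update_of_ne (fun h => hxv h)] at ha'
              simp [Function.update_self] at ha'
          have hxv : x ≠ v := by
            rintro rfl
            rw [hy₂] at ha'
            simp [Function.update_self] at ha'
          have hxw : x ≠ w := by
            simp only [Finset.mem_insert, Finset.mem_singleton] at hwmem
            rcases hwmem with rfl | rfl
            · exact hxu
            · exact hxv
          have heq : y₂ x = y₁ x := by
            rw [hy₂]
            simp [Function.update_of_ne hxv, Function.update_of_ne hxu]
          rw [Finset.mem_erase]
          refine ⟨hxw, ?_⟩
          simp only [Finset.mem_filter, Finset.mem_univ, true_and]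
          exact ⟨a', heq ▸ ha', hbad⟩
        have h1 : Ecard y₂ ≤ ((Finset.univ.filter
            (fun x : V => ∃ a, y₁ x = some a ∧ a ≠ fun i => c (Γ x i))).erase w).card :=
          Finset.card_le_card hsub
        rw [Finset.card_erase_of_mem hwE] at h1
        have h2 : 1 ≤ Ecard y₁ := Finset.card_pos.mpr ⟨w, hwE⟩
        have hEy₁ : (Finset.univ.filter
            (fun u : V => ∃ a, y₁ u = some a ∧ a ≠ fun i => c (Γ u i))).card = Ecard y₁ := rfl
        rw [hEy₁] at h1
        omega
      omega
  have hinv := key y' hsteps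
  -- counting: correct vertices form the complement of errors ∪ erasures
  set Cset : Finset V := Finset.univ.filter
    (fun u : V => y' u = some fun i => c (Γ u i)) with hCset
  set Eset : Finset V := Finset.univ.filter
    (fun u : V => ∃ a, y' u = some a ∧ a ≠ fun i => c (Γ u i)) with hEset
  set Sset : Finset V := Finset.univ.filter (fun u : V => y' u = none) with hSset
  have hcompl : Cset = Finset.univ \ (Eset ∪ Sset) := by
    ext x
    simp only [hCset, hEset, hSset, Finset.mem_filter, Finset.mem_univ, true_and,
      Finset.mem_sdiff, Finset.mem_union, not_or]
    constructor
    · intro hx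
      refine ⟨?_, ?_⟩
      · rintro ⟨a, ha, hbad⟩
        rw [hx] at ha
        exact hbad (Option.some_injective _ ha).symm
      · rw [hx]; simp
    · rintro ⟨hne, hnn⟩
      cases hval : y' x with
      | none => exact absurd hval hnn
      | some a =>
        have : a = fun i => c (Γ x i) := by
          by_contra hbad
          exact hne ⟨a, hval, hbad⟩
        exact congrArg some this
  have hcard : (Fintype.card V) ≤ Cset.card + Eset.card + Sset.card := by
    have h1 : Cset.card = Fintype.card V - (Eset ∪ Sset).card := by
      rw [hcompl, Finset.card_sdiff_of_subset (Finset.subset_univ _), Finset.card_univ]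
    have h2 : (Eset ∪ Sset).card ≤ Eset.card + Sset.card := Finset.card_union_le _ _
    have h3 : (Eset ∪ Sset).card ≤ Fintype.card V := by
      rw [← Finset.card_univ]; exact Finset.card_le_card (Finset.subset_univ _)
    omega
  have hboundN : K + (2 * e + s) < Fintype.card V := by
    have : (K : ℝ) + (2 * e + s : ℝ) < (Fintype.card V : ℝ) := by linarith
    exact_mod_cast this
  have hKC : K ≤ Cset.card := by
    have hE' : 2 * Eset.card + Sset.card ≤ 2 * e + s := hinv
    omega
  refine ⟨hKC, ?_⟩
  -- disperser conclusion
  have hsub : Cset.biUnion (fun v => Finset.image (Γ v) Finset.univ) ⊆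
      Finset.univ.filter (fun w : R =>
        ∃ (u : V) (i : Fin D), Γ u i = w ∧ y' u = some fun i' => c (Γ u i')) := by
    intro w hw
    simp only [Finset.mem_biUnion, Finset.mem_image, Finset.mem_univ, true_and] at hw
    obtain ⟨u, hu, i, hi⟩ := hw
    simp only [hCset, Finset.mem_filter, Finset.mem_univ, true_and] at hu
    simp only [Finset.mem_filter, Finset.mem_univ, true_and]
    exact ⟨u, i, hi, hu⟩
  calc (1 - δ / 2) * (Fintype.card R) ≤
        ((Cset.biUnion (fun v => Finset.image (Γ v) Finset.univ)).card : ℝ) := hG Cset hKC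
    _ ≤ _ := by exact_mod_cast Finset.card_le_card hsub
end
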